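/- Let T be a tournament and uv an arc that lies in more than k distinct directed triangles. Then T has a feedback arc set of size at most k if and only if the tournament obtained by reversing the arc uv has a feedback arc set of size at most k-1. -/

import Mathlib

/-- A tournament: irreflexive, and exactly one arc between every pair of distinct vertices. -/
def IsTournament {V : Type*} (r : V → V → Prop) : Prop :=
  (∀ v, ¬ r v v) ∧ ∀ u v : V, u ≠ v → (r u v ↔ ¬ r v u)

/-- A digraph (given by its arc relation) is acyclic: no directed cycle. -/
def Acyclic {V : Type*} (r : V → V → Prop) : Prop :=
  ∀ v, ¬ Relation.TransGen r v v

/-- If the arc `uv` lies in more than `k` distinct directed triangles, then `T` has a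
feedback arc set of size at most `k` iff the tournament obtained by reversing `uv`
has a feedback arc set of size at most `k - 1`. -/
theorem stmt1 {V : Type*} [Fintype V] (r : V → V → Prop) (hT : IsTournament r)
    (u v : V) (huv : r u v) (k : ℕ)
    (htri : k < {w : V | r v w ∧ r w u}.ncard) :
    (∃ F : Finset (V × V), F.card ≤ k ∧
        Acyclic (fun a b => r a b ∧ (a, b) ∉ F)) ↔
    (∃ F : Finset (V × V), F.card + 1 ≤ k ∧
        Acyclic (fun a b => ((r a b ∧ (a, b) ≠ (u, v)) ∨ (a, b) = (v, u)) ∧ (a, b) ∉ F)) := by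
  classical
  constructor
  · rintro ⟨F, hFcard, hFacy⟩
    set s : V → V → Prop := Relation.TransGen (fun a b => r a b ∧ (a, b) ∉ F) with hs
    have hstrans : Transitive s := fun a b c => Relation.TransGen.trans
    have hsirr : ∀ x, ¬ s x x := hFacy
    set f : V → ℕ := fun x => Set.ncard {w : V | s w x} with hf
    have hmono : ∀ a b, s a b → f a < f b := by
      intro a b hab
      have hsub : {w : V | s w a} ⊂ {w : V | s w b} := by
        constructor
        · intro w hw
          exact hstrans hw hab
        · intro hsub2
          exact hsirr a (hsub2 hab)
      exact Set.ncard_lt_ncard hsub (Set.toFinite _)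
    have hFmem : ∀ a b : V, r a b → f b ≤ f a → (a, b) ∈ F := by
      intro a b hr hle
      by_contra h
      exact absurd (hmono a b (Relation.TransGen.single ⟨hr, h⟩)) (by omega)
    set F'' : Finset (V × V) := F.filter (fun p => r p.1 p.2 ∧ f p.2 ≤ f p.1) with hF''
    have hF''sub : F'' ⊆ F := Finset.filter_subset _ _
    have hF''card : F''.card ≤ k := le_trans (Finset.card_le_card hF''sub) hFcard
    -- the arc (u,v) must be a back arc
    have huvF'' : (u, v) ∈ F'' := by
      by_contra hcon
      have hflt : f u < f v := by
        by_contra hge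
        push_neg at hge
        exact hcon (Finset.mem_filter.mpr ⟨hFmem u v huv hge, huv, hge⟩)
      set W : Set V := {w : V | r v w ∧ r w u} with hW
      set g : V → V × V := fun w => if f u ≤ f w then (w, u) else (v, w) with hg
      have hgmem : ∀ w ∈ W, g w ∈ F'' := by
        intro w hw
        by_cases hc : f u ≤ f w
        · simp only [hg, if_pos hc]
          exact Finset.mem_filter.mpr ⟨hFmem w u hw.2 hc, hw.2, hc⟩
        · simp only [hg, if_neg hc]
          push_neg at hc
          have hc' : f w ≤ f v := le_of_lt (lt_trans hc hflt)
          exact Finset.mem_filter.mpr ⟨hFmem v w hw.1 hc', hw.1, hc'⟩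
      have hvW : v ∉ W := fun h => hT.1 v h.1
      have huW : u ∉ W := fun h => hT.1 u h.2
      have hinj : Set.InjOn g W := by
        intro a ha b hb hab
        by_cases hca : f u ≤ f a <;> by_cases hcb : f u ≤ f b <;>
          simp only [hg, if_pos, if_neg, hca, hcb, if_true, if_false,
            Prod.mk.injEq] at hab
        · exact hab.1
        · exact absurd (hab.1 ▸ ha) hvW
        · exact absurd (hab.1.symm ▸ hb) hvW
        · exact hab.2
      have himg : g '' W ⊆ (F'' : Set (V × V)) := by
        rintro p ⟨w, hw, rfl⟩
        exact hgmem w hw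
      have : W.ncard ≤ F''.card := by
        calc W.ncard = (g '' W).ncard := (Set.ncard_image_of_injOn hinj).symm
        _ ≤ (F'' : Set (V × V)).ncard := Set.ncard_le_ncard himg (Finset.finite_toSet _)
        _ = F''.card := Set.ncard_coe_finset _
      omega
    have hfvu : f v ≤ f u := (Finset.mem_filter.mp huvF'').2.2
    refine ⟨F''.erase (u, v), ?_, ?_⟩
    · have h1 : 1 ≤ F''.card := Finset.card_pos.mpr ⟨_, huvF''⟩
      rw [Finset.card_erase_of_mem huvF'']
      omega
    · -- acyclicity of the reversed graph minus the erased set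
      set r'' : V → V → Prop := fun a b =>
        ((r a b ∧ (a, b) ≠ (u, v)) ∨ (a, b) = (v, u)) ∧ (a, b) ∉ F''.erase (u, v) with hr''
      have hedge : ∀ a b, r'' a b → f a < f b ∨ (a = v ∧ b = u) := by
        rintro a b ⟨(⟨hr, hne⟩ | heq), hnF⟩
        · left
          by_contra hle
          push_neg at hle
          have : (a, b) ∈ F'' :=
            Finset.mem_filter.mpr ⟨hFmem a b hr hle, hr, hle⟩
          exact hnF (Finset.mem_erase.mpr ⟨hne, this⟩)
        · right
          exact ⟨(Prod.mk.injEq _ _ _ _ ▸ heq).1, (Prod.mk.injEq _ _ _ _ ▸ heq).2⟩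
      have key : ∀ a b, Relation.TransGen r'' a b → f a < f b ∨ (a = v ∧ b = u) := by
        intro a b h
        induction h with
        | single h => exact hedge _ _ h
        | tail hab hbc ih =>
          rcases ih with hlt | ⟨hav, hbu⟩
          · rcases hedge _ _ hbc with hlt2 | ⟨hbv, hcu⟩
            · exact Or.inl (lt_trans hlt hlt2)
            · refine Or.inl ?_
              subst hbv; subst hcu
              omega
          · rcases hedge _ _ hbc with hlt2 | ⟨hbv, hcu⟩
            · refine Or.inl ?_
              subst hav; subst hbu
              omega
            · exact absurd huv (fun h => hT.1 v ((hbu ▸ hbv : u = v) ▸ h))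
      intro x hx
      rcases key x x hx with hlt | ⟨hxv, hxu⟩
      · omega
      · exact hT.1 v ((hxu ▸ hxv : u = v) ▸ huv)
  · rintro ⟨F', hc, hacy⟩
    refine ⟨insert (u, v) F', le_trans (Finset.card_insert_le _ _) hc, ?_⟩
    intro x hx
    refine hacy x (Relation.TransGen.mono ?_ _ _ hx)
    rintro a b ⟨hr, hnF⟩
    simp only [Finset.mem_insert, not_or] at hnF
    exact ⟨Or.inl ⟨hr, hnF.1⟩, hnF.2⟩
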